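/- Let r ≤ n and let S : M_r(ℂ) → M_n(ℂ) be the corner embedding sending a ∈ M_r(ℂ) to the n×n matrix having a as its top-left r×r block and zeros elsewhere. Then the kernel of the linear map Ŝ : M_r(ℂ)⊗ℂ^n → ℂ^n determined by a⊗η ↦ S(a)η equals the linear span N_S of the simple tensors a⊗η with a positive semidefinite and S(a)η = 0; equivalently, dim N_S = r²n − r. -/

import Mathlib

open Matrix ComplexOrder

noncomputable section

/-- A linear map between matrix algebras is positive if it sends positive
semidefinite matrices to positive semidefinite matrices. -/
def IsPosMap {m n : ℕ} (φ : Matrix (Fin m) (Fin m) ℂ →ₗ[ℂ] Matrix (Fin n) (Fin n) ℂ) : Prop :=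
  ∀ a : Matrix (Fin m) (Fin m) ℂ, a.PosSemidef → (φ a).PosSemidef

/-- A positive linear map `φ` is exposed (generates an exposed ray of the cone of
positive maps) if every positive map `ψ` such that `⟨η, φ(a) η⟩ = 0` implies
`⟨η, ψ(a) η⟩ = 0` (for `a` positive semidefinite) is a nonnegative multiple of `φ`. -/
def IsExposedMap {m n : ℕ} (φ : Matrix (Fin m) (Fin m) ℂ →ₗ[ℂ] Matrix (Fin n) (Fin n) ℂ) :
    Prop :=
  IsPosMap φ ∧
    ∀ ψ : Matrix (Fin m) (Fin m) ℂ →ₗ[ℂ] Matrix (Fin n) (Fin n) ℂ, IsPosMap ψ →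
      (∀ a : Matrix (Fin m) (Fin m) ℂ, a.PosSemidef → ∀ η : Fin n → ℂ,
        star η ⬝ᵥ (φ a) *ᵥ η = 0 → star η ⬝ᵥ (ψ a) *ᵥ η = 0) →
      ∃ c : ℝ, 0 ≤ c ∧ ψ = (c : ℂ) • φ

/-- The map `Ad_s : x ↦ s* x s`. -/
def adMap {m n : ℕ} (s : Matrix (Fin m) (Fin n) ℂ) :
    Matrix (Fin m) (Fin m) ℂ →ₗ[ℂ] Matrix (Fin n) (Fin n) ℂ where
  toFun x := sᴴ * x * s
  map_add' x y := by simp [Matrix.add_mul, Matrix.mul_add]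
  map_smul' c x := by simp [Matrix.smul_mul, Matrix.mul_smul]

/-- The transpose map on matrices, as a linear map. -/
def transposeLM (m : ℕ) : Matrix (Fin m) (Fin m) ℂ →ₗ[ℂ] Matrix (Fin m) (Fin m) ℂ where
  toFun x := xᵀ
  map_add' x y := Matrix.transpose_add x y
  map_smul' c x := by simp

/-- Woronowicz's map `φ̂ : M_m(ℂ) ⊗ ℂ^n → ℂ^n`, determined by `a ⊗ η ↦ φ(a) η`. -/
def hatMap {m n : ℕ} (φ : Matrix (Fin m) (Fin m) ℂ →ₗ[ℂ] Matrix (Fin n) (Fin n) ℂ) :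
    TensorProduct ℂ (Matrix (Fin m) (Fin m) ℂ) (Fin n → ℂ) →ₗ[ℂ] (Fin n → ℂ) :=
  TensorProduct.lift (Matrix.toLin'.toLinearMap.comp φ)

/-- The subspace `N_φ ⊆ M_m(ℂ) ⊗ ℂ^n` spanned by the simple tensors `a ⊗ η`
with `a` positive semidefinite and `φ(a) η = 0`. -/
def Nspace {m n : ℕ} (φ : Matrix (Fin m) (Fin m) ℂ →ₗ[ℂ] Matrix (Fin n) (Fin n) ℂ) :
    Submodule ℂ (TensorProduct ℂ (Matrix (Fin m) (Fin m) ℂ) (Fin n → ℂ)) :=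
  Submodule.span ℂ
    {x | ∃ (a : Matrix (Fin m) (Fin m) ℂ) (η : Fin n → ℂ),
      a.PosSemidef ∧ (φ a) *ᵥ η = 0 ∧ x = a ⊗ₜ[ℂ] η}

/-- The corner embedding `S : M_r(ℂ) → M_n(ℂ)` placing `a` as the top-left `r × r`
block and zeros elsewhere. -/
def cornerEmbed {r n : ℕ} (h : r ≤ n) :
    Matrix (Fin r) (Fin r) ℂ →ₗ[ℂ] Matrix (Fin n) (Fin n) ℂ where
  toFun a := Matrix.of fun i j =>
    if hi : (i : ℕ) < r then if hj : (j : ℕ) < r then a ⟨i, hi⟩ ⟨j, hj⟩ else 0 else 0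
  map_add' x y := by
    ext i j
    by_cases hi : (i : ℕ) < r <;> by_cases hj : (j : ℕ) < r <;> simp [hi, hj]
  map_smul' c x := by
    ext i j
    by_cases hi : (i : ℕ) < r <;> by_cases hj : (j : ℕ) < r <;> simp [hi, hj]

namespace CornerProof

variable {r n : ℕ}

lemma cornerEmbed_mulVec (h : r ≤ n) (a : Matrix (Fin r) (Fin r) ℂ) (η : Fin n → ℂ) :
    cornerEmbed h a *ᵥ η = fun i : Fin n =>
      if hi : (i : ℕ) < r then (a *ᵥ fun j => η (Fin.castLE h j)) ⟨i, hi⟩ else 0 := by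
  funext i
  by_cases hi : (i : ℕ) < r
  · simp only [hi, dif_pos, Matrix.mulVec, dotProduct, cornerEmbed,
      LinearMap.coe_mk, AddHom.coe_mk, Matrix.of_apply]
    have h1 : ∑ x : Fin r, a ⟨(i : ℕ), hi⟩ x * η (Fin.castLE h x)
        = ∑ k ∈ Finset.univ.map (Fin.castLEEmb h),
            (if hk : (k : ℕ) < r then a ⟨(i : ℕ), hi⟩ ⟨(k : ℕ), hk⟩ else 0) * η k := by
      rw [Finset.sum_map]
      apply Finset.sum_congr rfl
      intro k _
      have hk : ((Fin.castLEEmb h k : Fin n) : ℕ) < r := k.isLt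
      simp [hk]
    rw [h1]
    refine (Finset.sum_subset (Finset.subset_univ _) ?_).symm
    intro k _ hk
    have : ¬ (k : ℕ) < r := by
      intro hlt
      exact hk (Finset.mem_map.2 ⟨⟨(k : ℕ), hlt⟩, Finset.mem_univ _, by
        simp [Fin.castLEEmb, Fin.castLE, Fin.ext_iff]⟩)
    simp [this]
  · simp only [hi, dif_neg, not_false_iff]
    simp only [Matrix.mulVec, dotProduct, cornerEmbed, LinearMap.coe_mk,
      AddHom.coe_mk, Matrix.of_apply]
    apply Finset.sum_eq_zero
    intro k _
    simp [hi]

lemma vecMulVec_mulVec (v w x : Fin r → ℂ) :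
    vecMulVec v w *ᵥ x = (w ⬝ᵥ x) • v := by
  funext i
  simp [Matrix.vecMulVec_apply, Matrix.mulVec, dotProduct, Finset.mul_sum,
    Pi.smul_apply, smul_eq_mul, Finset.sum_mul]
  ring_nf

lemma posSemidef_vecMulVec_star (v : Fin r → ℂ) : (vecMulVec v (star v)).PosSemidef := by
  rw [posSemidef_iff_dotProduct_mulVec]
  constructor
  · ext i j
    simp [Matrix.conjTranspose_apply, Matrix.vecMulVec_apply, mul_comm]
  · intro x
    rw [vecMulVec_mulVec]
    have : star x ⬝ᵥ (star v ⬝ᵥ x) • v = (star v ⬝ᵥ x) * (star x ⬝ᵥ v) := by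
      simp [dotProduct_smul, smul_eq_mul, mul_comm]
    rw [this]
    have hc : star x ⬝ᵥ v = (starRingEnd ℂ) (star v ⬝ᵥ x) := by
      simp [dotProduct, map_sum, mul_comm]
    rw [hc, Complex.mul_conj]
    exact_mod_cast Complex.normSq_nonneg _

end CornerProof

namespace CornerProof

variable {r n : ℕ}

lemma hatMap_tmul {m k : ℕ} (φ : Matrix (Fin m) (Fin m) ℂ →ₗ[ℂ] Matrix (Fin k) (Fin k) ℂ)
    (a : Matrix (Fin m) (Fin m) ℂ) (η : Fin k → ℂ) :
    hatMap φ (a ⊗ₜ[ℂ] η) = φ a *ᵥ η := by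
  simp [hatMap, Matrix.toLin'_apply]

lemma lemA (h : r ≤ n) (v : Fin r → ℂ) (η : Fin n → ℂ)
    (hv : (star v) ⬝ᵥ (fun j => η (Fin.castLE h j)) = 0) :
    (vecMulVec v (star v)) ⊗ₜ[ℂ] η ∈ Nspace (cornerEmbed h) := by
  apply Submodule.subset_span
  refine ⟨_, _, posSemidef_vecMulVec_star v, ?_, rfl⟩
  rw [cornerEmbed_mulVec]
  funext i
  by_cases hi : (i : ℕ) < r
  · simp only [hi, dif_pos]
    rw [vecMulVec_mulVec, hv]
    simp
  · simp [hi]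

lemma lemB (h : r ≤ n) (v w : Fin r → ℂ) (η : Fin n → ℂ)
    (hv : (star v) ⬝ᵥ (fun j => η (Fin.castLE h j)) = 0)
    (hw : (star w) ⬝ᵥ (fun j => η (Fin.castLE h j)) = 0) :
    (vecMulVec v (star w)) ⊗ₜ[ℂ] η ∈ Nspace (cornerEmbed h) := by
  have key : ∀ s : ℂ, (vecMulVec (v + s • w) (star (v + s • w))) ⊗ₜ[ℂ] η
      ∈ Nspace (cornerEmbed h) := by
    intro s
    apply lemA
    have : star (v + s • w) = star v + star s • star w := by
      simp [star_add, star_smul]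
    rw [this, add_dotProduct, smul_dotProduct, hv, hw]
    simp
  have hexp : (vecMulVec v (star w)) ⊗ₜ[ℂ] η
      = (4⁻¹ : ℂ) • ((vecMulVec (v + (1:ℂ) • w) (star (v + (1:ℂ) • w))) ⊗ₜ[ℂ] η)
      + (Complex.I / 4) • ((vecMulVec (v + Complex.I • w) (star (v + Complex.I • w))) ⊗ₜ[ℂ] η)
      + (-(4⁻¹ : ℂ)) • ((vecMulVec (v + (-1:ℂ) • w) (star (v + (-1:ℂ) • w))) ⊗ₜ[ℂ] η)
      + (-(Complex.I / 4)) • ((vecMulVec (v + (-Complex.I) • w) (star (v + (-Complex.I) • w))) ⊗ₜ[ℂ] η) := by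
    rw [TensorProduct.smul_tmul', TensorProduct.smul_tmul', TensorProduct.smul_tmul',
      TensorProduct.smul_tmul', ← TensorProduct.add_tmul, ← TensorProduct.add_tmul,
      ← TensorProduct.add_tmul]
    congr 1
    ext i j
    simp only [Matrix.add_apply, Matrix.smul_apply, Matrix.vecMulVec_apply, Pi.add_apply,
      Pi.smul_apply, Pi.star_apply, smul_eq_mul, Complex.star_def, map_add, _root_.map_mul,
      _root_.map_one, map_neg, Complex.conj_I]
    linear_combination ((v i * (starRingEnd ℂ) (w j) - w i * (starRingEnd ℂ) (v j))/2) * Complex.I_sq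
  rw [hexp]
  exact Submodule.add_mem _ (Submodule.add_mem _ (Submodule.add_mem _
    (Submodule.smul_mem _ _ (key 1)) (Submodule.smul_mem _ _ (key Complex.I)))
    (Submodule.smul_mem _ _ (key (-1)))) (Submodule.smul_mem _ _ (key (-Complex.I)))

end CornerProof

namespace CornerProof

variable {r n : ℕ}

def tb (r n : ℕ) : Module.Basis ((Fin r × Fin r) × Fin n) ℂ
    (TensorProduct ℂ (Matrix (Fin r) (Fin r) ℂ) (Fin n → ℂ)) :=
  Module.Basis.tensorProduct (Matrix.stdBasis ℂ (Fin r) (Fin r)) (Pi.basisFun ℂ (Fin n))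

lemma stdBasis_repr (M : Matrix (Fin r) (Fin r) ℂ) (p : Fin r × Fin r) :
    (Matrix.stdBasis ℂ (Fin r) (Fin r)).repr M p = M p.1 p.2 := by
  simp [Matrix.stdBasis, Pi.basis_repr]

lemma tb_repr (M : Matrix (Fin r) (Fin r) ℂ) (u : Fin n → ℂ) (q : (Fin r × Fin r) × Fin n) :
    (tb r n).repr (M ⊗ₜ[ℂ] u) q = M q.1.1 q.1.2 * u q.2 := by
  obtain ⟨⟨a, b⟩, k⟩ := q
  rw [tb, Module.Basis.tensorProduct_repr_tmul_apply]
  simp [stdBasis_repr, Pi.basisFun_repr, mul_comm]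

lemma star_single (y : Fin r) :
    star (Pi.single y (1:ℂ) : Fin r → ℂ) = Pi.single y 1 := by
  funext j
  rcases eq_or_ne j y with rfl | hj
  · simp
  · simp [Pi.single_eq_of_ne hj]

lemma sbm_eq (x y : Fin r) :
    Matrix.single x y (1:ℂ) = vecMulVec (Pi.single x 1) (star (Pi.single y 1)) := by
  rw [star_single]
  exact Matrix.single_eq_single_vecMulVec_single x y

lemma mem_easy (h : r ≤ n) (x y : Fin r) (k : Fin n)
    (hkx : k ≠ Fin.castLE h x) (hky : k ≠ Fin.castLE h y) :
    Matrix.single x y (1:ℂ) ⊗ₜ[ℂ] (Pi.single k 1 : Fin n → ℂ)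
      ∈ Nspace (cornerEmbed h) := by
  rw [sbm_eq]
  refine lemB h _ _ _ ?_ ?_ <;> rw [star_single, single_dotProduct, one_mul]
  · exact Pi.single_eq_of_ne hkx.symm 1
  · exact Pi.single_eq_of_ne hky.symm 1

end CornerProof

namespace CornerProof

variable {r n : ℕ}

def Fhard (h : r ≤ n) (x y : Fin r) (s : ℂ) :
    TensorProduct ℂ (Matrix (Fin r) (Fin r) ℂ) (Fin n → ℂ) :=
  (vecMulVec ((Pi.single y 1 : Fin r → ℂ) + s • (Pi.single x 1 : Fin r → ℂ))
      (star ((Pi.single y 1 : Fin r → ℂ) + s • (Pi.single x 1 : Fin r → ℂ)))) ⊗ₜ[ℂ]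
    ((-((starRingEnd ℂ) s)) • (Pi.single (Fin.castLE h y) 1 : Fin n → ℂ)
      + (Pi.single (Fin.castLE h x) 1 : Fin n → ℂ))

set_option synthInstance.maxHeartbeats 1000000 in
set_option maxHeartbeats 4000000 in
set_option maxRecDepth 100000 in
lemma hard_id (h : r ≤ n) (x y : Fin r) (hxy : x ≠ y) :
    Matrix.single x y (1:ℂ) ⊗ₜ[ℂ] (Pi.single (Fin.castLE h x) 1 : Fin n → ℂ)
      = (4⁻¹ : ℂ) • Fhard h x y 1 - (4⁻¹ : ℂ) • Fhard h x y (-1)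
        - (Complex.I / 4) • Fhard h x y Complex.I
        + (Complex.I / 4) • Fhard h x y (-Complex.I) := by
  have hxy' : Fin.castLE h x ≠ Fin.castLE h y := fun e => hxy (Fin.castLE_injective h e)
  apply (tb r n).repr.injective
  ext q
  obtain ⟨⟨a, b⟩, k⟩ := q
  simp only [Fhard, _root_.map_add, _root_.map_sub, _root_.map_smul, Finsupp.add_apply,
    Finsupp.sub_apply, Finsupp.smul_apply, tb_repr, smul_eq_mul]
  simp only [Matrix.vecMulVec_apply, Pi.add_apply, Pi.smul_apply, Pi.star_apply,
    smul_eq_mul, Complex.star_def, map_add, _root_.map_mul, _root_.map_one, map_neg,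
    Complex.conj_I, sbm_eq, Matrix.vecMulVec_apply, star_single, Pi.single_apply]
  split_ifs <;>
    first
      | (norm_num [Complex.ext_iff]; done)
      | (exact absurd (by grind : x = y) hxy)
      | (exact absurd (by grind : Fin.castLE h x = Fin.castLE h y) hxy')

lemma Fhard_mem (h : r ≤ n) (x y : Fin r) (hxy : x ≠ y) (s : ℂ) :
    Fhard h x y s ∈ Nspace (cornerEmbed h) := by
  have hxy' : Fin.castLE h x ≠ Fin.castLE h y := fun e => hxy (Fin.castLE_injective h e)
  apply lemA
  have hstar : star ((Pi.single y 1 : Fin r → ℂ) + s • (Pi.single x 1 : Fin r → ℂ))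
      = (Pi.single y 1 : Fin r → ℂ) + (starRingEnd ℂ) s • (Pi.single x 1 : Fin r → ℂ) := by
    rw [star_add, star_smul, star_single, star_single, Complex.star_def]
  rw [hstar, add_dotProduct, smul_dotProduct,
    single_dotProduct, single_dotProduct]
  simp only [one_mul, smul_eq_mul, Pi.add_apply, Pi.smul_apply,
    Pi.single_eq_same, Pi.single_eq_of_ne hxy', Pi.single_eq_of_ne hxy'.symm]
  ring

lemma mem_hard (h : r ≤ n) (x y : Fin r) (hxy : x ≠ y) :
    Matrix.single x y (1:ℂ) ⊗ₜ[ℂ] (Pi.single (Fin.castLE h x) 1 : Fin n → ℂ)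
      ∈ Nspace (cornerEmbed h) := by
  have hFmem : ∀ s : ℂ, Fhard h x y s ∈ Nspace (cornerEmbed h) := Fhard_mem h x y hxy
  rw [hard_id h x y hxy]
  exact Submodule.add_mem _ (Submodule.sub_mem _ (Submodule.sub_mem _
    (Submodule.smul_mem _ _ (hFmem 1)) (Submodule.smul_mem _ _ (hFmem (-1))))
    (Submodule.smul_mem _ _ (hFmem Complex.I))) (Submodule.smul_mem _ _ (hFmem (-Complex.I)))

set_option synthInstance.maxHeartbeats 1000000 in
set_option maxHeartbeats 4000000 in
set_option maxRecDepth 100000 in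
lemma diag_id (h : r ≤ n) (x y : Fin r) (hxy : x ≠ y) :
    Matrix.single x y (1:ℂ) ⊗ₜ[ℂ] (Pi.single (Fin.castLE h y) 1 : Fin n → ℂ)
      - Matrix.single x x (1:ℂ) ⊗ₜ[ℂ] (Pi.single (Fin.castLE h x) 1 : Fin n → ℂ)
      = (2⁻¹ : ℂ) • Fhard h y x 1 - (2⁻¹ : ℂ) • Fhard h y x (-1)
        - Matrix.single y x (1:ℂ) ⊗ₜ[ℂ] (Pi.single (Fin.castLE h y) 1 : Fin n → ℂ)
        + Matrix.single y y (1:ℂ) ⊗ₜ[ℂ] (Pi.single (Fin.castLE h x) 1 : Fin n → ℂ) := by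
  have hxy' : Fin.castLE h x ≠ Fin.castLE h y := fun e => hxy (Fin.castLE_injective h e)
  apply (tb r n).repr.injective
  ext q
  obtain ⟨⟨a, b⟩, k⟩ := q
  simp only [Fhard, _root_.map_add, _root_.map_sub, _root_.map_smul, Finsupp.add_apply,
    Finsupp.sub_apply, Finsupp.smul_apply, tb_repr, smul_eq_mul]
  simp only [Matrix.vecMulVec_apply, Pi.add_apply, Pi.smul_apply, Pi.star_apply,
    smul_eq_mul, Complex.star_def, map_add, _root_.map_mul, _root_.map_one, map_neg,
    Complex.conj_I, sbm_eq, Matrix.vecMulVec_apply, star_single, Pi.single_apply]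
  split_ifs <;>
    first
      | (norm_num; done)
      | (exact absurd (by grind : x = y) hxy)
      | (exact absurd (by grind : Fin.castLE h x = Fin.castLE h y) hxy')
      | (norm_num [Complex.ext_iff]; done)

lemma mem_diag (h : r ≤ n) (x y : Fin r) (hxy : x ≠ y) :
    Matrix.single x y (1:ℂ) ⊗ₜ[ℂ] (Pi.single (Fin.castLE h y) 1 : Fin n → ℂ)
      - Matrix.single x x (1:ℂ) ⊗ₜ[ℂ] (Pi.single (Fin.castLE h x) 1 : Fin n → ℂ)
      ∈ Nspace (cornerEmbed h) := by
  have hxy' : Fin.castLE h x ≠ Fin.castLE h y := fun e => hxy (Fin.castLE_injective h e)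
  rw [diag_id h x y hxy]
  refine Submodule.add_mem _ (Submodule.sub_mem _ (Submodule.sub_mem _
    (Submodule.smul_mem _ _ (Fhard_mem h y x hxy.symm 1))
    (Submodule.smul_mem _ _ (Fhard_mem h y x hxy.symm (-1))))
    (mem_hard h y x hxy.symm)) (mem_easy h y y _ hxy' hxy')

def famIdx (r n : ℕ) (h : r ≤ n) : Type :=
  {p : (Fin r × Fin r) × Fin n // p.2 ≠ Fin.castLE h p.1.2}
    ⊕ {q : Fin r × Fin r // q.1 ≠ q.2}

instance (h : r ≤ n) : Fintype (famIdx r n h) := by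
  unfold famIdx; infer_instance

instance (h : r ≤ n) : DecidableEq (famIdx r n h) := by
  unfold famIdx; infer_instance

def fam (h : r ≤ n) : famIdx r n h → TensorProduct ℂ (Matrix (Fin r) (Fin r) ℂ) (Fin n → ℂ)
  | .inl p => Matrix.single p.1.1.1 p.1.1.2 1 ⊗ₜ[ℂ] Pi.single p.1.2 1
  | .inr q => Matrix.single q.1.1 q.1.2 1 ⊗ₜ[ℂ] Pi.single (Fin.castLE h q.1.2) 1
      - Matrix.single q.1.1 q.1.1 1 ⊗ₜ[ℂ] Pi.single (Fin.castLE h q.1.1) 1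

def pivot (h : r ≤ n) : famIdx r n h → (Fin r × Fin r) × Fin n
  | .inl p => p.1
  | .inr q => (q.1, Fin.castLE h q.1.2)

lemma fam_mem (h : r ≤ n) (ω : famIdx r n h) : fam h ω ∈ Nspace (cornerEmbed h) := by
  cases ω with
  | inl p =>
    obtain ⟨⟨⟨x, y⟩, k⟩, hk⟩ := p
    simp only [fam]
    by_cases hkx : k = Fin.castLE h x
    · subst hkx
      have hxy : x ≠ y := fun e => hk (by rw [e])
      exact mem_hard h x y hxy
    · exact mem_easy h x y k hkx hk
  | inr q =>
    obtain ⟨⟨x, y⟩, hxy⟩ := q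
    exact mem_diag h x y hxy

set_option synthInstance.maxHeartbeats 1000000 in
set_option maxHeartbeats 1000000 in
lemma fam_repr_self (h : r ≤ n) (ω : famIdx r n h) :
    (tb r n).repr (fam h ω) (pivot h ω) = 1 := by
  cases ω with
  | inl p =>
    obtain ⟨⟨⟨x, y⟩, k⟩, hk⟩ := p
    simp [fam, pivot, tb_repr, sbm_eq, Matrix.vecMulVec_apply, star_single]
  | inr q =>
    obtain ⟨⟨x, y⟩, hxy⟩ := q
    simp [fam, pivot, map_sub, Finsupp.sub_apply, tb_repr, sbm_eq,
      Matrix.vecMulVec_apply, star_single, Pi.single_apply, Ne.symm hxy]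

set_option synthInstance.maxHeartbeats 1000000 in
set_option maxHeartbeats 2000000 in
lemma fam_repr_ne (h : r ≤ n) (ω ω' : famIdx r n h) (hne : ω' ≠ ω) :
    (tb r n).repr (fam h ω) (pivot h ω') = 0 := by
  cases ω with
  | inl p =>
    obtain ⟨⟨⟨x, y⟩, k⟩, hk⟩ := p
    cases ω' with
    | inl p' =>
      obtain ⟨⟨⟨a, b⟩, k'⟩, hk'⟩ := p'
      have hvals : ¬(a = x ∧ b = y ∧ k' = k) := by
        rintro ⟨rfl, rfl, rfl⟩
        exact hne (congrArg Sum.inl (Subtype.ext rfl))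
      simp only [fam, pivot, tb_repr, sbm_eq, Matrix.vecMulVec_apply, star_single,
        Pi.single_apply]
      split_ifs with h1 h2 h3 <;>
        first
          | (norm_num; done)
          | exact absurd ⟨h1, h2, h3⟩ hvals
    | inr q' =>
      obtain ⟨⟨a, b⟩, hab⟩ := q'
      simp only [fam, pivot, tb_repr, sbm_eq, Matrix.vecMulVec_apply, star_single,
        Pi.single_apply]
      split_ifs <;>
        first
          | (norm_num; done)
          | (exfalso; apply hk; grind)
  | inr q =>
    obtain ⟨⟨x, y⟩, hxy⟩ := q
    cases ω' with
    | inl p' =>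
      obtain ⟨⟨⟨a, b⟩, k'⟩, hk'⟩ := p'
      simp only [fam, pivot, map_sub, Finsupp.sub_apply, tb_repr, sbm_eq,
        Matrix.vecMulVec_apply, star_single, Pi.single_apply]
      split_ifs <;>
        first
          | (norm_num; done)
          | (exfalso; apply hk'; grind)
    | inr q' =>
      obtain ⟨⟨a, b⟩, hab⟩ := q'
      have hvals : ¬(a = x ∧ b = y) := by
        rintro ⟨rfl, rfl⟩
        exact hne (congrArg Sum.inr (Subtype.ext rfl))
      simp only [fam, pivot, map_sub, Finsupp.sub_apply, tb_repr, sbm_eq,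
        Matrix.vecMulVec_apply, star_single, Pi.single_apply]
      split_ifs <;>
        first
          | (norm_num; done)
          | (exfalso; apply hvals; constructor <;> grind)
          | (exfalso; apply hab; grind)
          | (exfalso; apply hxy; grind)

lemma fam_indep (h : r ≤ n) : LinearIndependent ℂ (fam h) := by
  set Φ : TensorProduct ℂ (Matrix (Fin r) (Fin r) ℂ) (Fin n → ℂ) →ₗ[ℂ]
      (famIdx r n h → ℂ) :=
    LinearMap.pi (fun ω' => Finsupp.lapply (pivot h ω') ∘ₗ ((tb r n).repr :
      TensorProduct ℂ (Matrix (Fin r) (Fin r) ℂ) (Fin n → ℂ) →ₗ[ℂ] _)) with hΦ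
  apply LinearIndependent.of_comp Φ
  have hcomp : ⇑Φ ∘ fam h = fun ω => (Pi.single ω 1 : famIdx r n h → ℂ) := by
    funext ω
    funext ω'
    rcases eq_or_ne ω' ω with rfl | hne
    · simp [hΦ, LinearMap.pi_apply, Finsupp.lapply_apply, fam_repr_self]
    · simp [hΦ, LinearMap.pi_apply, Finsupp.lapply_apply, fam_repr_ne h _ _ hne,
        Pi.single_eq_of_ne hne]
  rw [hcomp]
  have hb : (fun ω => (Pi.single ω 1 : famIdx r n h → ℂ))
      = ⇑(Pi.basisFun ℂ (famIdx r n h)) := by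
    funext ω; simp
  rw [hb]
  exact (Pi.basisFun ℂ (famIdx r n h)).linearIndependent

lemma card_famIdx (h : r ≤ n) :
    Fintype.card (famIdx r n h) = (r * r * n - r * r) + (r * r - r) := by
  have e1 : {p : (Fin r × Fin r) × Fin n // p.2 = Fin.castLE h p.1.2} ≃ Fin r × Fin r :=
    { toFun := fun q => q.1.1
      invFun := fun xy => ⟨(xy, Fin.castLE h xy.2), rfl⟩
      left_inv := fun q => Subtype.ext (by
        obtain ⟨⟨xy, k⟩, hk⟩ := q
        simp only at hk
        simp [hk])
      right_inv := fun xy => rfl }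
  have e2 : {q : Fin r × Fin r // q.1 = q.2} ≃ Fin r :=
    { toFun := fun q => q.1.1
      invFun := fun x => ⟨(x, x), rfl⟩
      left_inv := fun q => Subtype.ext (by
        obtain ⟨⟨a, b⟩, hq⟩ := q
        simp only at hq
        simp [hq])
      right_inv := fun x => rfl }
  have c1 : Fintype.card {p : (Fin r × Fin r) × Fin n // p.2 ≠ Fin.castLE h p.1.2}
      = r * r * n - r * r := by
    rw [Fintype.card_subtype_compl, Fintype.card_congr e1]
    simp [mul_assoc]
  have c2 : Fintype.card {q : Fin r × Fin r // q.1 ≠ q.2} = r * r - r := by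
    rw [Fintype.card_subtype_compl, Fintype.card_congr e2]
    simp
  unfold famIdx
  rw [Fintype.card_sum, c1, c2]

lemma single_mem_range (h : r ≤ n) (x : Fin r) :
    (Pi.single (Fin.castLE h x) 1 : Fin n → ℂ)
      ∈ LinearMap.range (hatMap (cornerEmbed h)) := by
  refine ⟨Matrix.single x x 1 ⊗ₜ[ℂ] Pi.single (Fin.castLE h x) 1, ?_⟩
  rw [hatMap_tmul, cornerEmbed_mulVec]
  funext i
  by_cases hi : (i : ℕ) < r
  · simp only [hi, dif_pos]
    have hfun : (fun j => (Pi.single (Fin.castLE h x) 1 : Fin n → ℂ) (Fin.castLE h j))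
        = (Pi.single x 1 : Fin r → ℂ) := by
      funext j
      rcases eq_or_ne j x with rfl | hj
      · simp
      · rw [Pi.single_eq_of_ne hj, Pi.single_eq_of_ne (by simpa using hj)]
    rw [hfun, sbm_eq, vecMulVec_mulVec, star_single, single_dotProduct]
    simp [Pi.single_apply, Fin.ext_iff, Fin.castLE, eq_comm]
  · simp only [hi, dif_neg, not_false_iff]
    have : i ≠ Fin.castLE h x := by
      intro e
      apply hi
      rw [e]
      exact x.isLt
    rw [Pi.single_eq_of_ne this]

lemma range_finrank_ge (h : r ≤ n) :
    r ≤ Module.finrank ℂ (LinearMap.range (hatMap (cornerEmbed h))) := by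
  have hindep : LinearIndependent ℂ
      (fun x : Fin r => (Pi.single (Fin.castLE h x) 1 : Fin n → ℂ)) := by
    have hb := (Pi.basisFun ℂ (Fin n)).linearIndependent
    have hcomp := hb.comp (Fin.castLE h) (Fin.castLE_injective h)
    have : (⇑(Pi.basisFun ℂ (Fin n)) ∘ Fin.castLE h)
        = fun x : Fin r => (Pi.single (Fin.castLE h x) 1 : Fin n → ℂ) := by
      funext x; simp [Function.comp]
    rwa [this] at hcomp
  have hspan : Submodule.span ℂ
      (Set.range (fun x : Fin r => (Pi.single (Fin.castLE h x) 1 : Fin n → ℂ)))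
      ≤ LinearMap.range (hatMap (cornerEmbed h)) := by
    rw [Submodule.span_le]
    rintro t ⟨x, rfl⟩
    exact single_mem_range h x
  have := Submodule.finrank_mono hspan
  rwa [finrank_span_eq_card hindep, Fintype.card_fin] at this

theorem main (h : r ≤ n) :
    LinearMap.ker (hatMap (cornerEmbed h)) = Nspace (cornerEmbed h) ∧
    Module.finrank ℂ (Nspace (cornerEmbed h)) = r ^ 2 * n - r := by
  have hNker : Nspace (cornerEmbed h) ≤ LinearMap.ker (hatMap (cornerEmbed h)) := by
    rw [Nspace, Submodule.span_le]
    rintro t ⟨a, η, _, hzero, rfl⟩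
    simp only [SetLike.mem_coe, LinearMap.mem_ker, hatMap_tmul, hzero]
  have hfam_span_le : Submodule.span ℂ (Set.range (fam h)) ≤ Nspace (cornerEmbed h) := by
    rw [Submodule.span_le]
    rintro t ⟨ω, rfl⟩
    exact fam_mem h ω
  have hNge : r ^ 2 * n - r ≤ Module.finrank ℂ (Nspace (cornerEmbed h)) := by
    have h1 := finrank_span_eq_card (fam_indep h)
    have h2 := Submodule.finrank_mono hfam_span_le
    rw [h1, card_famIdx h] at h2
    have e2 : r ≤ r * r := by
      rcases Nat.eq_zero_or_pos r with rfl | hr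
      · simp
      · exact Nat.le_mul_of_pos_left r hr
    rcases Nat.eq_zero_or_pos n with rfl | hn
    · have hr0 : r = 0 := Nat.le_zero.1 h
      subst hr0
      simp
    · have e1 : r * r ≤ r * r * n := Nat.le_mul_of_pos_right _ hn
      have key : ∀ M K R : ℕ, R ≤ K → K ≤ M → M - R ≤ (M - K) + (K - R) := by
        intro M K R h1 h2; omega
      calc r ^ 2 * n - r = r * r * n - r := by rw [pow_two]
        _ ≤ (r * r * n - r * r) + (r * r - r) := key _ _ _ e2 e1
        _ ≤ _ := h2
  have htot : Module.finrank ℂ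
      (TensorProduct ℂ (Matrix (Fin r) (Fin r) ℂ) (Fin n → ℂ)) = r ^ 2 * n := by
    rw [Module.finrank_tensorProduct, Module.finrank_matrix,
      Module.finrank_fintype_fun_eq_card, Module.finrank_self]
    simp only [Fintype.card_fin, mul_one]
    ring
  have hrank := LinearMap.finrank_range_add_finrank_ker (hatMap (cornerEmbed h))
  rw [htot] at hrank
  have hrge := range_finrank_ge h
  have hker_le : Module.finrank ℂ (LinearMap.ker (hatMap (cornerEmbed h)))
      ≤ r ^ 2 * n - r := by
    generalize hM : r ^ 2 * n = M at hrank ⊢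
    omega
  have heq : Nspace (cornerEmbed h) = LinearMap.ker (hatMap (cornerEmbed h)) :=
    Submodule.eq_of_le_of_finrank_le hNker (le_trans hker_le hNge)
  have hfr : Module.finrank ℂ (Nspace (cornerEmbed h)) = r ^ 2 * n - r := by
    refine le_antisymm ?_ hNge
    rw [heq]
    exact hker_le
  exact ⟨heq.symm, hfr⟩

end CornerProof

/-- For `r ≤ n` and the corner embedding `S : M_r(ℂ) → M_n(ℂ)`, the kernel of
`Ŝ : M_r(ℂ) ⊗ ℂ^n → ℂ^n` equals the span `N_S` of the simple tensors `a ⊗ η` with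
`a` positive semidefinite and `S(a) η = 0`; equivalently, `dim N_S = r² n - r`. -/
theorem ker_hatMap_cornerEmbed_eq_Nspace {r n : ℕ} (h : r ≤ n) :
    LinearMap.ker (hatMap (cornerEmbed h)) = Nspace (cornerEmbed h) ∧
    Module.finrank ℂ (Nspace (cornerEmbed h)) = r ^ 2 * n - r := by
  exact CornerProof.main h

end
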